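/- The stagnation-detection algorithm SD-RLS^r with parameter choice R = n^d for a constant d > 0 has expected runtime n^{Ω(log n)} on the function TwoRates. -/

import Mathlib

open scoped ENNReal Classical

namespace SDRLS

/-- Bit strings of length `n`. -/
abbrev Point (n : ℕ) := Fin n → Bool

/-- Flip the bits of `x` at the positions in `S`. -/
def flipSet {n : ℕ} (x : Point n) (S : Finset (Fin n)) : Point n :=
  fun j => if j ∈ S then !(x j) else x j

/-- Flip exactly `r` positions of `x`, chosen uniformly at random
(junk value: no flip, if `r > n`). -/
noncomputable def flipPMF (n r : ℕ) (x : Point n) : PMF (Point n) :=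
  if h : ((Finset.univ : Finset (Fin n)).powersetCard r).Nonempty then
    (PMF.uniformOfFinset _ h).map (flipSet x)
  else PMF.pure x

/-- Number of one-bits of `x`. -/
def oneBits {n : ℕ} (x : Point n) : ℕ := (Finset.univ.filter fun i => x i = true).card

/-- A state of SD-RLS^r: current solution `x`, current rate `r`, counter `cnt`. -/
structure State (n : ℕ) where
  x : Point n
  r : ℕ
  cnt : ℕ

/-- One iteration of SD-RLS^r with parameter `R`, maximizing `f`: flip `r` bits
chosen uniformly at random; accept only strict improvements (resetting the rate
to `1`); after `C(n,r)·ln R` consecutive unsuccessful iterations at rate `r`,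
increase the rate to `r+1` (rates are used up to `n/2`) and reset the counter. -/
noncomputable def step (n : ℕ) (f : Point n → ℝ) (R : ℝ) (s : State n) :
    PMF (State n) :=
  (flipPMF n s.r s.x).map fun y =>
    if f s.x < f y then ⟨y, 1, 0⟩
    else if (n.choose s.r : ℝ) * Real.log R ≤ (s.cnt + 1 : ℝ) then
      ⟨s.x, min (s.r + 1) (n / 2), 0⟩
    else ⟨s.x, s.r, s.cnt + 1⟩

/-- `x` is a global optimum (maximum) of `f`. -/
def isOpt (n : ℕ) (f : Point n → ℝ) (x : Point n) : Prop := ∀ y, f y ≤ f x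

/-- The SD-RLS^r step, made absorbing in the optimal states. -/
noncomputable def stepAbs (n : ℕ) (f : Point n → ℝ) (R : ℝ) (s : State n) :
    PMF (State n) :=
  if isOpt n f s.x then PMF.pure s else step n f R s

/-- Initial state: uniformly random solution, rate `1`, counter `0`. -/
noncomputable def initPMF (n : ℕ) : PMF (State n) :=
  (PMF.uniformOfFintype (Point n)).map fun x => ⟨x, 1, 0⟩

/-- Distribution of the (absorbed) SD-RLS^r state after `t` iterations. -/
noncomputable def stateAt (n : ℕ) (f : Point n → ℝ) (R : ℝ) : ℕ → PMF (State n)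
  | 0 => initPMF n
  | t + 1 => (stateAt n f R t).bind (stepAbs n f R)

/-- Expected runtime (number of `f`-evaluations until an optimum of `f` is first
evaluated) of SD-RLS^r on `f`. -/
noncomputable def expectedRuntime (n : ℕ) (f : Point n → ℝ) (R : ℝ) : ℝ≥0∞ :=
  1 + ∑' t : ℕ, (stateAt n f R t).toOuterMeasure {s | ¬ isOpt n f s.x}

/-- The TwoRates function (with parameters `s` and `g`): `x ↦ |x|₁` if `|x|₁ < s`,
or `|x|₁ ≥ (3/4)n`, or `|x|₁ = s + i·g` for an admissible `i`
(the admissible `i ∈ {0,2,3,5,6,8,9,…}` are exactly those with `i mod 3 ≠ 1`);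
otherwise `x ↦ −1`. -/
noncomputable def TwoRates (n s g : ℕ) (x : Point n) : ℝ :=
  if oneBits x < s ∨ 3 * n ≤ 4 * oneBits x ∨
      ∃ i : ℕ, i % 3 ≠ 1 ∧ oneBits x = s + i * g then
    (oneBits x : ℝ)
  else -1

/-! ### Generic helper lemmas -/

lemma tsum_map {β γ : Type*} (p : PMF β) (f : β → γ) (h : γ → ℝ≥0∞) :
    ∑' c, p.map f c * h c = ∑' b, p b * h (f b) := by
  have key : ∀ c, p.map f c * h c = ∑' b, (if c = f b then p b * h (f b) else 0) := by
    intro c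
    rw [PMF.map_apply, ← ENNReal.tsum_mul_right]
    congr 1; funext b
    by_cases hb : c = f b <;> simp [hb]
  rw [tsum_congr key, ENNReal.tsum_comm]
  exact tsum_congr fun b => tsum_ite_eq (f b) (fun _ => p b * h (f b))

lemma le_tsum_pmf {β : Type*} (p : PMF β) (h : β → ℝ≥0∞) (c : ℝ≥0∞)
    (H : ∀ b ∈ p.support, c ≤ h b) : c ≤ ∑' b, p b * h b := by
  calc c = (∑' b, p b) * c := by rw [p.tsum_coe, one_mul]
    _ = ∑' b, p b * c := by rw [ENNReal.tsum_mul_right]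
    _ ≤ ∑' b, p b * h b := by
        refine ENNReal.tsum_le_tsum fun b => ?_
        by_cases hb : p b = 0
        · simp [hb]
        · exact mul_le_mul_right (H b hb) _

/-! ### oneBits lemmas -/

lemma oneBits_le {n : ℕ} (x : Point n) : oneBits x ≤ n := by
  simpa [oneBits] using (Finset.card_filter_le Finset.univ fun i => x i = true)

lemma oneBits_flipSet_le {n : ℕ} (x : Point n) (S : Finset (Fin n)) :
    oneBits (flipSet x S) ≤ oneBits x + S.card ∧
      oneBits x ≤ oneBits (flipSet x S) + S.card := by
  constructor
  · refine le_trans (le_trans (Finset.card_le_card ?_) (Finset.card_union_le _ _)) le_rfl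
    intro i hi
    simp only [Finset.mem_filter, Finset.mem_univ, true_and, flipSet] at hi
    by_cases hiS : i ∈ S
    · exact Finset.mem_union_right _ hiS
    · simp [hiS] at hi
      exact Finset.mem_union_left _ (by simp [hi])
  · refine le_trans (le_trans (Finset.card_le_card ?_) (Finset.card_union_le _ _)) le_rfl
    intro i hi
    simp only [Finset.mem_filter, Finset.mem_univ, true_and] at hi
    by_cases hiS : i ∈ S
    · exact Finset.mem_union_right _ hiS
    · exact Finset.mem_union_left _ (by simp [flipSet, hiS, hi])

lemma support_flipPMF {n : ℕ} (r : ℕ) (x : Point n) :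
    ∀ y ∈ (flipPMF n r x).support,
      oneBits y ≤ oneBits x + r ∧ oneBits x ≤ oneBits y + r := by
  intro y hy
  unfold flipPMF at hy
  split at hy
  · rename_i hne
    rw [PMF.support_map, PMF.support_uniformOfFinset] at hy
    obtain ⟨S, hS, rfl⟩ := hy
    have hcard : S.card = r := (Finset.mem_powersetCard.mp hS).2
    simpa [hcard] using oneBits_flipSet_le x S
  · simp only [PMF.support_pure, Set.mem_singleton_iff] at hy
    subst hy; omega

lemma oneBits_flip_false {n : ℕ} (x : Point n) (i : Fin n) (h : x i = false) :
    oneBits (flipSet x {i}) = oneBits x + 1 := by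
  unfold oneBits
  have : (Finset.univ.filter fun j => flipSet x {i} j = true)
      = insert i (Finset.univ.filter fun j => x j = true) := by
    ext j
    by_cases hj : j = i <;> simp [flipSet, hj, h]
  rw [this, Finset.card_insert_of_notMem (by simp [h]), Nat.add_comm]

lemma oneBits_flip_true {n : ℕ} (x : Point n) (i : Fin n) (h : x i = true) :
    oneBits (flipSet x {i}) + 1 = oneBits x := by
  unfold oneBits
  have heq : (Finset.univ.filter fun j => x j = true)
      = insert i (Finset.univ.filter fun j => flipSet x {i} j = true) := by
    ext j
    by_cases hj : j = i <;> simp [flipSet, hj, h]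
  rw [heq, Finset.card_insert_of_notMem (by simp [flipSet, h])]

lemma oneBits_not {n : ℕ} (x : Point n) :
    oneBits (fun i => !(x i)) + oneBits x = n := by
  unfold oneBits
  have : (Finset.univ.filter fun i => (!(x i)) = true)
      = Finset.univ.filter fun i => ¬ (x i = true) := by
    ext i; simp
  rw [this, Nat.add_comm]
  simpa using Finset.card_filter_add_card_filter_not
    (s := Finset.univ) (p := fun i : Fin n => x i = true)


lemma master (n : ℕ) (f : Point n → ℝ) (R : ℝ) (w : ℕ → State n → ℝ≥0∞)
    (h0 : ∀ σ, w 0 σ = 0)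
    (hstep : ∀ m σ, w (m + 1) σ ≤
      (if isOpt n f σ.x then 0 else 1) + ∑' σ', stepAbs n f R σ σ' * w m σ') :
    ∀ (M : ℕ) (μ : PMF (State n)),
      (∑' σ, μ σ * w M σ) ≤
        ∑ t ∈ Finset.range M,
          ((fun ν : PMF (State n) => ν.bind (stepAbs n f R))^[t] μ).toOuterMeasure
            {σ | ¬ isOpt n f σ.x} := by
  intro M
  induction M with
  | zero => intro μ; simp [h0]
  | succ M ih =>
    intro μ
    have key : ∑' σ, μ σ * w (M + 1) σ ≤
        μ.toOuterMeasure {σ | ¬ isOpt n f σ.x}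
          + ∑' σ', (μ.bind (stepAbs n f R)) σ' * w M σ' := by
      calc ∑' σ, μ σ * w (M + 1) σ
          ≤ ∑' σ, μ σ * ((if isOpt n f σ.x then 0 else 1)
              + ∑' σ', stepAbs n f R σ σ' * w M σ') :=
            ENNReal.tsum_le_tsum fun σ => mul_le_mul_right (hstep M σ) _
        _ = (∑' σ, μ σ * (if isOpt n f σ.x then 0 else 1))
            + ∑' σ, μ σ * ∑' σ', stepAbs n f R σ σ' * w M σ' := by
            rw [← ENNReal.tsum_add]
            exact tsum_congr fun σ => mul_add _ _ _
        _ = _ := by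
            congr 1
            · rw [PMF.toOuterMeasure_apply]
              refine tsum_congr fun σ => ?_
              by_cases h : isOpt n f σ.x <;> simp [Set.indicator, h]
            · rw [tsum_congr fun σ => (ENNReal.tsum_mul_left
                  (a := μ σ) (f := fun σ' => stepAbs n f R σ σ' * w M σ')).symm,
                ENNReal.tsum_comm]
              refine tsum_congr fun σ' => ?_
              rw [PMF.bind_apply, ← ENNReal.tsum_mul_right]
              exact tsum_congr fun σ => by rw [← mul_assoc]
    refine key.trans ?_
    rw [Finset.sum_range_succ']
    simp only [Function.iterate_zero_apply]
    rw [add_comm]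
    refine add_le_add ?_ le_rfl
    refine (ih _).trans (le_of_eq (Finset.sum_congr rfl fun t _ => ?_))
    rw [Function.iterate_succ_apply]


lemma stateAt_eq (n : ℕ) (f : Point n → ℝ) (R : ℝ) (t : ℕ) :
    stateAt n f R t = (fun ν : PMF (State n) => ν.bind (stepAbs n f R))^[t] (initPMF n) := by
  induction t with
  | zero => rfl
  | succ t ih => rw [stateAt, Function.iterate_succ_apply', ih]

/-! ### The potential function -/

noncomputable def dur (n : ℕ) (R : ℝ) (r : ℕ) : ℕ := ⌈(n.choose r : ℝ) * Real.log R⌉₊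

noncomputable def Wfun (n : ℕ) (R : ℝ) (g r c : ℕ) : ℕ :=
  (∑ r' ∈ Finset.Ico r (2 * g), dur n R r') - c

noncomputable def alph (n : ℕ) (R : ℝ) (c : ℕ) : ℝ := 1 - (3 / 4 : ℝ) ^ (dur n R 1 - c)

noncomputable def pot (n g s : ℕ) (R : ℝ) (m : ℕ) (σ : State n) : ℝ≥0∞ :=
  if oneBits σ.x = s then ((min m (Wfun n R g σ.r σ.cnt) : ℕ) : ℝ≥0∞)
  else if oneBits σ.x < s ∧ σ.r = 1 then
    ENNReal.ofReal ((alph n R 0) ^ (s - oneBits σ.x) * alph n R σ.cnt) *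
      ((min m (Wfun n R g 1 0) : ℕ) : ℝ≥0∞)
  else 0

lemma alph_nonneg {n : ℕ} {R : ℝ} (c : ℕ) : 0 ≤ alph n R c := by
  have : (3 / 4 : ℝ) ^ (dur n R 1 - c) ≤ 1 :=
    pow_le_one₀ (by norm_num) (by norm_num)
  simp only [alph]; linarith

lemma alph_le_one {n : ℕ} {R : ℝ} (c : ℕ) : alph n R c ≤ 1 := by
  have : (0:ℝ) ≤ (3 / 4 : ℝ) ^ (dur n R 1 - c) := by positivity
  simp only [alph]; linarith

lemma alph_rec {n : ℕ} {R : ℝ} (c : ℕ) :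
    alph n R c ≤ 1 / 4 + 3 / 4 * alph n R (c + 1) := by
  rcases le_or_gt (dur n R 1) c with h | h
  · have h1 : dur n R 1 - c = 0 := by omega
    have h3 : (3 / 4 : ℝ) ^ (dur n R 1 - (c + 1)) ≤ 1 :=
      pow_le_one₀ (by norm_num) (by norm_num)
    simp only [alph, h1, pow_zero]; linarith
  · have h1 : dur n R 1 - c = (dur n R 1 - (c + 1)) + 1 := by omega
    simp only [alph, h1, pow_succ]
    ring_nf
    linarith [le_refl (0:ℝ)]

lemma alph_bump {n : ℕ} {R : ℝ} {c : ℕ} (h : dur n R 1 ≤ c + 1) :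
    alph n R c ≤ 1 / 4 := by
  have h1 : dur n R 1 - c = 0 ∨ dur n R 1 - c = 1 := by omega
  rcases h1 with h1 | h1 <;> simp only [alph, h1, pow_zero, pow_one] <;> norm_num

/-! ### Core lemma -/

set_option maxHeartbeats 1000000 in
lemma core (n g s : ℕ) (R : ℝ)
    (hg : 0 < g)
    (h2gn : 2 * g ≤ n / 2)
    (hs3 : 4 * s ≤ 3 * n)
    (hgap : 4 * s + 8 * g ≤ 3 * n + 3)
    (hsn : s < n)
    (hns : n / 2 < s)
    (hlogR : 1 ≤ Real.log R)
    (htail : ((s : ℝ) + 1) * (3 / 4) ^ n ≤ 1 / 2) :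
    ENNReal.ofReal ((n.choose (2 * g - 1) : ℝ) / 4)
      ≤ expectedRuntime n (TwoRates n s g) R := by
  classical
  set f := TwoRates n s g with hf
  have hlogpos : 0 < Real.log R := lt_of_lt_of_le one_pos hlogR
  -- value lemmas
  have hval_le : ∀ y : Point n, f y ≤ (oneBits y : ℝ) := by
    intro y; rw [hf]; unfold TwoRates; split
    · exact le_refl _
    · have : (0:ℝ) ≤ (oneBits y : ℝ) := Nat.cast_nonneg _
      linarith
  have hval_lt : ∀ y : Point n, oneBits y < s → f y = (oneBits y : ℝ) := by
    intro y hy; rw [hf]; unfold TwoRates; rw [if_pos (Or.inl hy)]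
  have hval_s : ∀ y : Point n, oneBits y = s → f y = (s : ℝ) := by
    intro y hy; rw [hf]; unfold TwoRates
    rw [if_pos (Or.inr (Or.inr ⟨0, by norm_num, by simp [hy]⟩)), hy]
  have hval_gap : ∀ y : Point n, s < oneBits y → oneBits y < s + 2 * g → f y = -1 := by
    intro y h1 h2; rw [hf]; unfold TwoRates
    rw [if_neg]
    push_neg
    refine ⟨by omega, by omega, ?_⟩
    intro i hi3 hik
    have hig1 : 0 < i * g := by omega
    have hig2 : i * g < 2 * g := by omega
    have hi1 : i = 1 := by
      rcases Nat.lt_or_ge i 2 with h | h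
      · interval_cases i
        · omega
        · rfl
      · exact absurd (Nat.mul_le_mul_right g h) (by omega)
    subst hi1
    exact hi3 rfl
  have hones : oneBits (fun _ : Fin n => true) = n := by simp [oneBits]
  have hvtop : f (fun _ : Fin n => true) = (n : ℝ) := by
    rw [hf]; unfold TwoRates
    rw [if_pos (Or.inr (Or.inl (by rw [hones]; omega))), hones]
  have hnotopt : ∀ y : Point n, f y ≤ (s:ℝ) → ¬ isOpt n f y := by
    intro y hy hopt
    have h1 := hopt (fun _ => true)
    rw [hvtop] at h1
    have h2 : (s:ℝ) < (n:ℝ) := Nat.cast_lt.mpr hsn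
    linarith
  -- the one-step potential inequality
  have hstep : ∀ (m : ℕ) (σ : State n), pot n g s R (m+1) σ ≤
      (if isOpt n f σ.x then 0 else 1) + ∑' σ', stepAbs n f R σ σ' * pot n g s R m σ' := by
    intro m σ
    obtain ⟨x, r, c⟩ := σ
    dsimp only
    by_cases hx : oneBits x = s
    · -- plateau
      by_cases hW : Wfun n R g r c = 0
      · simp [pot, hx, hW]
      · have hr2g : r < 2 * g := by
          by_contra hcon
          apply hW
          unfold Wfun
          rw [Finset.Ico_eq_empty (by omega), Finset.sum_empty]
          omega
        have hfx : f x = (s:ℝ) := hval_s x hx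
        have hno : ¬ isOpt n f x := hnotopt x (le_of_eq hfx)
        rw [if_neg hno]
        have hE : ((min m (Wfun n R g r c - 1) : ℕ) : ℝ≥0∞)
            ≤ ∑' σ', stepAbs n f R ⟨x, r, c⟩ σ' * pot n g s R m σ' := by
          apply le_tsum_pmf
          intro σ' hσ'
          rw [stepAbs] at hσ'
          rw [if_neg hno] at hσ'
          rw [step, PMF.support_map] at hσ'
          obtain ⟨y, hy, rfl⟩ := hσ'
          have hyb := support_flipPMF r x y hy
          have hfy : ¬ (f x < f y) := by
            rw [not_lt, hfx]
            rcases le_or_gt (oneBits y) s with h | h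
            · exact le_trans (hval_le y) (by exact_mod_cast h)
            · rw [hval_gap y h (by omega)]
              have : (0:ℝ) ≤ (s:ℝ) := Nat.cast_nonneg _
              linarith
          dsimp only
          rw [if_neg hfy]
          split_ifs with hb
          · -- bump step
            have hdur : dur n R r ≤ c + 1 := by
              rw [dur]
              refine Nat.ceil_le.mpr ?_
              push_cast
              exact hb
            have hmin : min (r + 1) (n / 2) = r + 1 := by omega
            rw [hmin]
            have hWle : Wfun n R g r c - 1 ≤ Wfun n R g (r+1) 0 := by
              unfold Wfun
              rw [Finset.sum_eq_sum_Ico_succ_bot (by omega : r < 2*g)]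
              omega
            simp only [pot, hx, if_pos]
            exact Nat.cast_le.mpr (by omega)
          · have hWeq : Wfun n R g r (c+1) = Wfun n R g r c - 1 := by unfold Wfun; omega
            simp only [pot, hx, if_pos, hWeq]
            exact Nat.cast_le.mpr (by omega)
        calc pot n g s R (m+1) ⟨x,r,c⟩
            = ((min (m+1) (Wfun n R g r c) : ℕ) : ℝ≥0∞) := by simp [pot, hx]
          _ ≤ ((1 + min m (Wfun n R g r c - 1) : ℕ) : ℝ≥0∞) := Nat.cast_le.mpr (by omega)
          _ = 1 + ((min m (Wfun n R g r c - 1) : ℕ) : ℝ≥0∞) := by push_cast; ring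
          _ ≤ 1 + _ := add_le_add_right hE 1
    · by_cases hxb : oneBits x < s ∧ r = 1
      · obtain ⟨hk, hr1⟩ := hxb
        subst hr1
        have hfx : f x = (oneBits x : ℝ) := hval_lt x hk
        have hno : ¬ isOpt n f x := hnotopt x (by rw [hfx]; exact_mod_cast hk.le)
        have hn4 : 4 * oneBits x < 3 * n := by omega
        have h1n : 1 ≤ n := by omega
        rw [if_neg hno]
        have hP1 : ((Finset.univ : Finset (Fin n)).powersetCard 1).Nonempty := by
          refine ⟨{⟨0, by omega⟩}, ?_⟩
          rw [Finset.mem_powersetCard]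
          exact ⟨Finset.subset_univ _, Finset.card_singleton _⟩
        set F : Point n → State n := fun y =>
          if f x < f y then ⟨y, 1, 0⟩
          else if (n.choose 1 : ℝ) * Real.log R ≤ ((c:ℝ) + 1) then ⟨x, min (1+1) (n/2), 0⟩
          else ⟨x, 1, c + 1⟩ with hF
        have hstep_eq : stepAbs n f R ⟨x, 1, c⟩
            = (PMF.uniformOfFinset _ hP1).map (F ∘ flipSet x) := by
          rw [stepAbs, if_neg hno, step]
          dsimp only
          rw [flipPMF, dif_pos hP1, PMF.map_comp]
        rw [hstep_eq, tsum_map]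
        have hcard : ((Finset.univ : Finset (Fin n)).powersetCard 1).card = n := by
          rw [Finset.card_powersetCard, Finset.card_univ, Fintype.card_fin,
            Nat.choose_one_right]
        have himg : (Finset.univ : Finset (Fin n)).powersetCard 1
            = Finset.univ.image (fun i : Fin n => ({i} : Finset (Fin n))) := by
          ext S
          simp only [Finset.mem_powersetCard, Finset.mem_image, Finset.mem_univ, true_and]
          constructor
          · rintro ⟨-, hc⟩
            obtain ⟨i, rfl⟩ := Finset.card_eq_one.mp hc
            exact ⟨i, rfl⟩
          · rintro ⟨i, rfl⟩
            exact ⟨Finset.subset_univ _, Finset.card_singleton _⟩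
        have hsum_eq : ∑' S : Finset (Fin n),
              (PMF.uniformOfFinset _ hP1) S * pot n g s R m ((F ∘ flipSet x) S)
            = ∑ i : Fin n, (n : ℝ≥0∞)⁻¹ * pot n g s R m (F (flipSet x {i})) := by
          rw [tsum_eq_sum (s := (Finset.univ : Finset (Fin n)).powersetCard 1)
            (fun S hS => by rw [PMF.uniformOfFinset_apply_of_notMem hP1 hS, zero_mul])]
          rw [Finset.sum_congr rfl (fun S hS => by
            rw [PMF.uniformOfFinset_apply_of_mem hP1 hS, hcard])]
          rw [himg, Finset.sum_image (fun i _ j _ h => Finset.singleton_injective h)]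
          exact Finset.sum_congr rfl fun i _ => rfl
        rw [hsum_eq]
        rw [← Finset.sum_filter_add_sum_filter_not Finset.univ (fun i => x i = true)]
        -- names for the pieces
        set γ : ℝ := alph n R 0 with hγ
        have hγ0 : 0 ≤ γ := alph_nonneg 0
        have hγ1 : γ ≤ 1 := alph_le_one 0
        set β : ℝ := if (n.choose 1 : ℝ) * Real.log R ≤ ((c:ℝ) + 1) then (0:ℝ)
          else alph n R (c+1) with hβ
        have hβ0 : 0 ≤ β := by
          rw [hβ]; split
          · exact le_refl 0
          · exact alph_nonneg _
        have hβ1 : β ≤ 1 := by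
          rw [hβ]; split
          · norm_num
          · exact alph_le_one _
        set X : ℝ≥0∞ := ((min m (Wfun n R g 1 0) : ℕ) : ℝ≥0∞) with hX
        -- accept bound
        have haccept : ∀ i : Fin n, ¬ (x i = true) →
            ENNReal.ofReal (γ ^ (s - oneBits x - 1) * γ) * X
              ≤ pot n g s R m (F (flipSet x {i})) := by
          intro i hi
          have hifalse : x i = false := by
            cases hxi : x i
            · rfl
            · exact absurd hxi hi
          have hky : oneBits (flipSet x {i}) = oneBits x + 1 :=
            oneBits_flip_false x i hifalse
          have hacc : f x < f (flipSet x {i}) := by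
            rw [hfx]
            rcases lt_or_eq_of_le (by omega : oneBits x + 1 ≤ s) with h | h
            · rw [hval_lt _ (by omega), hky]
              exact_mod_cast Nat.lt_succ_self (oneBits x)
            · rw [hval_s _ (by omega), ← h]
              push_cast
              exact_mod_cast Nat.lt_succ_self (oneBits x)
          rw [hF]
          dsimp only
          rw [if_pos hacc]
          rcases lt_or_eq_of_le (by omega : oneBits x + 1 ≤ s) with h | h
          · have hpoty : pot n g s R m ⟨flipSet x {i}, 1, 0⟩
                = ENNReal.ofReal (γ ^ (s - oneBits x - 1) * γ) * X := by
              simp only [pot, hky]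
              rw [if_neg (by omega), if_pos (⟨by omega, trivial⟩ : _ ∧ _)]
              have he : s - (oneBits x + 1) = s - oneBits x - 1 := by omega
              rw [he, hγ]
            rw [hpoty]
          · have hpoty : pot n g s R m ⟨flipSet x {i}, 1, 0⟩ = X := by
              simp only [pot, hky]
              rw [if_pos h]
            rw [hpoty]
            have hcoef : ENNReal.ofReal (γ ^ (s - oneBits x - 1) * γ) ≤ 1 := by
              refine ENNReal.ofReal_le_one.mpr ?_
              have h1 : γ ^ (s - oneBits x - 1) ≤ 1 := pow_le_one₀ hγ0 hγ1
              nlinarith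
            calc ENNReal.ofReal (γ ^ (s - oneBits x - 1) * γ) * X ≤ 1 * X :=
                  mul_le_mul_left hcoef X
              _ = X := one_mul X
        -- reject bound
        have hreject : ∀ i : Fin n, x i = true →
            ENNReal.ofReal (γ ^ (s - oneBits x) * β) * X
              ≤ pot n g s R m (F (flipSet x {i})) := by
          intro i hi
          have hky : oneBits (flipSet x {i}) + 1 = oneBits x :=
            oneBits_flip_true x i hi
          have hrej : ¬ (f x < f (flipSet x {i})) := by
            rw [not_lt, hfx]
            refine le_trans (hval_le _) ?_
            exact_mod_cast (by omega : oneBits (flipSet x {i}) ≤ oneBits x)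
          rw [hF]
          dsimp only
          rw [if_neg hrej]
          by_cases hbc : (n.choose 1 : ℝ) * Real.log R ≤ ((c:ℝ) + 1)
          · rw [if_pos hbc]
            have hβ' : β = 0 := by rw [hβ, if_pos hbc]
            rw [hβ', mul_zero, ENNReal.ofReal_zero, zero_mul]
            exact zero_le
          · rw [if_neg hbc]
            have hβ' : β = alph n R (c+1) := by rw [hβ, if_neg hbc]
            have hpoty : pot n g s R m ⟨x, 1, c+1⟩
                = ENNReal.ofReal (γ ^ (s - oneBits x) * alph n R (c+1)) * X := by
              simp only [pot]
              rw [if_neg hx, if_pos (⟨hk, trivial⟩ : _ ∧ _), hγ]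
            rw [hpoty, hβ']
        -- sum the two parts
        have hsplit :
            (↑(oneBits x) * ((n : ℝ≥0∞)⁻¹ * (ENNReal.ofReal (γ ^ (s - oneBits x) * β) * X))
            + ↑(n - oneBits x) * ((n : ℝ≥0∞)⁻¹
                * (ENNReal.ofReal (γ ^ (s - oneBits x - 1) * γ) * X)))
            ≤ (∑ i ∈ Finset.univ.filter (fun i => x i = true),
                (n : ℝ≥0∞)⁻¹ * pot n g s R m (F (flipSet x {i})))
              + ∑ i ∈ Finset.univ.filter (fun i => ¬ x i = true),
                (n : ℝ≥0∞)⁻¹ * pot n g s R m (F (flipSet x {i})) := by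
          have hc1 : (Finset.univ.filter (fun i => x i = true)).card = oneBits x := rfl
          have hc2 : (Finset.univ.filter (fun i => ¬ x i = true)).card = n - oneBits x := by
            have := Finset.card_filter_add_card_filter_not
              (s := (Finset.univ : Finset (Fin n))) (p := fun i => x i = true)
            simp only [Finset.card_univ, Fintype.card_fin] at this
            omega
          refine add_le_add ?_ ?_
          · rw [← hc1]
            have := Finset.card_nsmul_le_sum (Finset.univ.filter (fun i => x i = true))
              (fun i => (n : ℝ≥0∞)⁻¹ * pot n g s R m (F (flipSet x {i})))
              ((n : ℝ≥0∞)⁻¹ * (ENNReal.ofReal (γ ^ (s - oneBits x) * β) * X))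
              (fun i hi => mul_le_mul_right (hreject i (Finset.mem_filter.mp hi).2) _)
            simpa [nsmul_eq_mul, hc1] using this
          · rw [← hc2]
            have := Finset.card_nsmul_le_sum (Finset.univ.filter (fun i => ¬ x i = true))
              (fun i => (n : ℝ≥0∞)⁻¹ * pot n g s R m (F (flipSet x {i})))
              ((n : ℝ≥0∞)⁻¹ * (ENNReal.ofReal (γ ^ (s - oneBits x - 1) * γ) * X))
              (fun i hi => mul_le_mul_right (haccept i (Finset.mem_filter.mp hi).2) _)
            simpa [nsmul_eq_mul] using this
        refine le_trans ?_ (add_le_add_right hsplit 1)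
        -- now a pure computation
        have hLHS : pot n g s R (m+1) ⟨x, 1, c⟩
            = ENNReal.ofReal (γ ^ (s - oneBits x) * alph n R c)
              * ((min (m+1) (Wfun n R g 1 0) : ℕ) : ℝ≥0∞) := by
          simp only [pot]
          rw [if_neg hx, if_pos (⟨hk, trivial⟩ : _ ∧ _), hγ]
        rw [hLHS]
        -- scalar inequality
        have hscal : (n:ℝ) * (γ ^ (s - oneBits x) * alph n R c)
            ≤ (oneBits x : ℝ) * (γ ^ (s - oneBits x) * β)
              + ((n - oneBits x : ℕ) : ℝ) * (γ ^ (s - oneBits x - 1) * γ) := by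
          have hpow : γ ^ (s - oneBits x - 1) * γ = γ ^ (s - oneBits x) := by
            rw [← pow_succ]
            congr 1
            omega
          rw [hpow]
          have hknat : ((n - oneBits x : ℕ) : ℝ) = (n:ℝ) - (oneBits x : ℝ) := by
            have : oneBits x ≤ n := oneBits_le x
            push_cast [this]
            ring
          rw [hknat]
          have hKr : (0:ℝ) ≤ γ ^ (s - oneBits x) := by positivity
          have hkn : 4 * (oneBits x : ℝ) < 3 * (n:ℝ) := by exact_mod_cast hn4
          have hcore : (n:ℝ) * alph n R c ≤ (oneBits x : ℝ) * β + ((n:ℝ) - oneBits x) := by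
            by_cases hbc : (n.choose 1 : ℝ) * Real.log R ≤ ((c:ℝ) + 1)
            · have hβ' : β = 0 := by rw [hβ, if_pos hbc]
              have hbump : dur n R 1 ≤ c + 1 := by
                rw [dur]
                refine Nat.ceil_le.mpr ?_
                push_cast
                exact hbc
              have ha14 := alph_bump hbump
              have hn0 : (0:ℝ) ≤ (n:ℝ) := Nat.cast_nonneg n
              rw [hβ']
              nlinarith
            · have hβ' : β = alph n R (c+1) := by rw [hβ, if_neg hbc]
              have hrec := alph_rec (n := n) (R := R) c
              have ha0 := alph_nonneg (n := n) (R := R) (c+1)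
              have ha1 := alph_le_one (n := n) (R := R) (c+1)
              have hn0 : (0:ℝ) ≤ (n:ℝ) := Nat.cast_nonneg n
              rw [hβ']
              nlinarith
          nlinarith [mul_le_mul_of_nonneg_left hcore hKr]
        -- lift to ℝ≥0∞
        have hn0' : ((n:ℕ) : ℝ≥0∞) ≠ 0 := by
          simp only [ne_eq, Nat.cast_eq_zero]
          omega
        have hntop : ((n:ℕ) : ℝ≥0∞) ≠ ⊤ := ENNReal.natCast_ne_top n
        have hcoefle : ENNReal.ofReal (γ ^ (s - oneBits x) * alph n R c)
            ≤ ↑(oneBits x) * ((n : ℝ≥0∞)⁻¹ * ENNReal.ofReal (γ ^ (s - oneBits x) * β))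
              + ↑(n - oneBits x) * ((n : ℝ≥0∞)⁻¹
                * ENNReal.ofReal (γ ^ (s - oneBits x - 1) * γ)) := by
          have hlift : (n : ℝ≥0∞) * ENNReal.ofReal (γ ^ (s - oneBits x) * alph n R c)
              ≤ ↑(oneBits x) * ENNReal.ofReal (γ ^ (s - oneBits x) * β)
                + ↑(n - oneBits x) * ENNReal.ofReal (γ ^ (s - oneBits x - 1) * γ) := by
            rw [← ENNReal.ofReal_natCast n, ← ENNReal.ofReal_natCast (oneBits x),
              ← ENNReal.ofReal_natCast (n - oneBits x),
              ← ENNReal.ofReal_mul (Nat.cast_nonneg _),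
              ← ENNReal.ofReal_mul (Nat.cast_nonneg _),
              ← ENNReal.ofReal_mul (Nat.cast_nonneg _),
              ← ENNReal.ofReal_add (by positivity) (by positivity)]
            exact ENNReal.ofReal_le_ofReal hscal
          calc ENNReal.ofReal (γ ^ (s - oneBits x) * alph n R c)
              = (n : ℝ≥0∞)⁻¹ * ((n : ℝ≥0∞)
                  * ENNReal.ofReal (γ ^ (s - oneBits x) * alph n R c)) := by
                rw [← mul_assoc, ENNReal.inv_mul_cancel hn0' hntop, one_mul]
            _ ≤ (n : ℝ≥0∞)⁻¹ * (↑(oneBits x) * ENNReal.ofReal (γ ^ (s - oneBits x) * β)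
                + ↑(n - oneBits x) * ENNReal.ofReal (γ ^ (s - oneBits x - 1) * γ)) :=
                mul_le_mul_right hlift _
            _ = _ := by ring
        -- the min bound
        have hmin : ((min (m+1) (Wfun n R g 1 0) : ℕ) : ℝ≥0∞) ≤ X + 1 := by
          rw [hX, show ((1:ℝ≥0∞)) = ((1:ℕ):ℝ≥0∞) by simp, ← Nat.cast_add]
          exact Nat.cast_le.mpr (by omega)
        have hcoef1 : ENNReal.ofReal (γ ^ (s - oneBits x) * alph n R c) ≤ 1 := by
          refine ENNReal.ofReal_le_one.mpr ?_
          have h1 : γ ^ (s - oneBits x) ≤ 1 := pow_le_one₀ hγ0 hγ1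
          have h2 := alph_le_one (n := n) (R := R) c
          have h3 := alph_nonneg (n := n) (R := R) c
          nlinarith
        calc ENNReal.ofReal (γ ^ (s - oneBits x) * alph n R c)
              * ((min (m+1) (Wfun n R g 1 0) : ℕ) : ℝ≥0∞)
            ≤ ENNReal.ofReal (γ ^ (s - oneBits x) * alph n R c) * (X + 1) :=
              mul_le_mul_right hmin _
          _ = ENNReal.ofReal (γ ^ (s - oneBits x) * alph n R c) * X
              + ENNReal.ofReal (γ ^ (s - oneBits x) * alph n R c) := by ring
          _ ≤ ENNReal.ofReal (γ ^ (s - oneBits x) * alph n R c) * X + 1 :=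
              add_le_add_right hcoef1 _
          _ ≤ (↑(oneBits x) * ((n : ℝ≥0∞)⁻¹ * ENNReal.ofReal (γ ^ (s - oneBits x) * β))
              + ↑(n - oneBits x) * ((n : ℝ≥0∞)⁻¹
                * ENNReal.ofReal (γ ^ (s - oneBits x - 1) * γ))) * X + 1 := by
              exact add_le_add_left (mul_le_mul_left hcoefle X) 1
          _ = 1 + (↑(oneBits x) * ((n : ℝ≥0∞)⁻¹
                * (ENNReal.ofReal (γ ^ (s - oneBits x) * β) * X))
              + ↑(n - oneBits x) * ((n : ℝ≥0∞)⁻¹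
                * (ENNReal.ofReal (γ ^ (s - oneBits x - 1) * γ) * X))) := by ring
      · have h0 : pot n g s R (m+1) ⟨x,r,c⟩ = 0 := by
          simp only [pot]
          rw [if_neg hx, if_neg hxb]
        rw [h0]
        exact zero_le
  -- final assembly
  set T0 := Wfun n R g 1 0 with hT0
  have hmain := master n f R (pot n g s R)
    (fun σ => by unfold pot; split_ifs <;> simp) hstep T0 (initPMF n)
  -- basic quantities
  have hγ0 : 0 ≤ alph n R 0 := alph_nonneg 0
  have hγ1 : alph n R 0 ≤ 1 := alph_le_one 0
  have hKn : n ≤ dur n R 1 := by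
    have h2 : (n:ℝ) ≤ (n:ℝ) * Real.log R :=
      le_mul_of_one_le_right (Nat.cast_nonneg _) hlogR
    have h3 : (n:ℝ) ≤ ((dur n R 1 : ℕ):ℝ) := by
      refine le_trans h2 ?_
      rw [dur, Nat.choose_one_right]
      exact Nat.le_ceil _
    exact_mod_cast h3
  have hhalf : ∀ k : ℕ, k < s → (1:ℝ)/2 ≤ (alph n R 0)^(s - k) * alph n R 0 := by
    intro k hkx
    have e1 : (alph n R 0)^(s-k) * alph n R 0 = (alph n R 0)^(s-k+1) := (pow_succ _ _).symm
    rw [e1]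
    have e2 : (alph n R 0)^(s+1) ≤ (alph n R 0)^(s-k+1) :=
      pow_le_pow_of_le_one hγ0 hγ1 (by omega)
    have ht0 : (0:ℝ) ≤ (3/4:ℝ)^(dur n R 1) := by positivity
    have ht1 : (3/4:ℝ)^(dur n R 1) ≤ 1 := pow_le_one₀ (by norm_num) (by norm_num)
    have e3 : 1 - ((s:ℝ)+1) * (3/4)^(dur n R 1) ≤ (alph n R 0)^(s+1) := by
      have hγeq : alph n R 0 = 1 - (3/4:ℝ)^(dur n R 1) := by rw [alph, Nat.sub_zero]
      have H := one_add_mul_le_pow (a := -((3/4:ℝ)^(dur n R 1))) (by linarith) (s+1)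
      rw [hγeq, sub_eq_add_neg]
      push_cast at H
      calc 1 - ((s:ℝ)+1) * (3/4)^(dur n R 1)
          = 1 + ((s:ℝ)+1) * (-((3/4:ℝ)^(dur n R 1))) := by ring
        _ ≤ (1 + -((3/4:ℝ)^(dur n R 1)))^(s+1) := H
    have e4 : (3/4:ℝ)^(dur n R 1) ≤ (3/4:ℝ)^n :=
      pow_le_pow_of_le_one (by norm_num) (by norm_num) hKn
    have e5 : (0:ℝ) ≤ (s:ℝ)+1 := by positivity
    nlinarith [mul_le_mul_of_nonneg_left e4 e5]
  -- the initial expectation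
  have hterm : ∀ x : Point n, 2 * oneBits x ≤ n →
      ENNReal.ofReal (1/2) * (T0 : ℝ≥0∞) ≤ pot n g s R T0 ⟨x,1,0⟩ := by
    intro x hx2
    have hkx : oneBits x < s := by omega
    have hp : pot n g s R T0 ⟨x,1,0⟩
        = ENNReal.ofReal ((alph n R 0)^(s - oneBits x) * alph n R 0)
          * ((min T0 T0 : ℕ) : ℝ≥0∞) := by
      simp only [pot]
      rw [if_neg (by omega), if_pos (⟨hkx, trivial⟩ : _ ∧ _)]
    rw [hp, min_self]
    exact mul_le_mul_left (ENNReal.ofReal_le_ofReal (hhalf _ hkx)) _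
  have hpair : 2 ^ n ≤ 2 * (Finset.univ.filter (fun x : Point n => 2 * oneBits x ≤ n)).card := by
    classical
    have hinj : ∀ x ∈ Finset.univ.filter (fun x : Point n => ¬ 2 * oneBits x ≤ n),
        (fun i => !(x i)) ∈ Finset.univ.filter (fun x : Point n => 2 * oneBits x ≤ n) := by
      intro x hx
      simp only [Finset.mem_filter, Finset.mem_univ, true_and] at hx ⊢
      have := oneBits_not x
      omega
    have hcard := Finset.card_le_card_of_injOn _ hinj (by
      intro x _ y _ h
      funext i
      have := congrFun h i
      simpa using this)
    have htot := Finset.card_filter_add_card_filter_not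
      (s := (Finset.univ : Finset (Point n))) (p := fun x : Point n => 2 * oneBits x ≤ n)
    have hcu : (Finset.univ : Finset (Point n)).card = 2^n := by
      rw [Finset.card_univ]
      rw [show Fintype.card (Point n) = 2^n by simp [Fintype.card_fun]]
    omega
  have hinit : ENNReal.ofReal (1/4) * (T0 : ℝ≥0∞)
      ≤ ∑' σ, initPMF n σ * pot n g s R T0 σ := by
    rw [initPMF, tsum_map, tsum_fintype]
    set cardf := (Finset.univ.filter (fun x : Point n => 2 * oneBits x ≤ n)).card with hcf
    have hc0 : (cardf : ℝ≥0∞) ≠ 0 := by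
      have h1 : 1 ≤ 2^n := Nat.one_le_two_pow
      simp only [ne_eq, Nat.cast_eq_zero]
      omega
    have hw : (2:ℝ≥0∞)⁻¹ ≤ (cardf : ℝ≥0∞) * ((2:ℝ≥0∞)^n)⁻¹ := by
      have hcard2 : ((2:ℝ≥0∞))^n ≤ 2 * cardf := by
        calc ((2:ℝ≥0∞))^n = ((2^n : ℕ) : ℝ≥0∞) := by push_cast; rfl
          _ ≤ ((2 * cardf : ℕ) : ℝ≥0∞) := Nat.cast_le.mpr hpair
          _ = 2 * cardf := by push_cast; rfl
      have h2 : (2:ℝ≥0∞)⁻¹ * ((2:ℝ≥0∞)^n) ≤ (cardf : ℝ≥0∞) := by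
        calc (2:ℝ≥0∞)⁻¹ * ((2:ℝ≥0∞)^n) ≤ (2:ℝ≥0∞)⁻¹ * (2 * cardf) :=
              mul_le_mul_right hcard2 _
          _ = cardf := by
              rw [← mul_assoc, ENNReal.inv_mul_cancel (by norm_num) (by norm_num), one_mul]
      calc (2:ℝ≥0∞)⁻¹ = (2:ℝ≥0∞)⁻¹ * ((2:ℝ≥0∞)^n) * ((2:ℝ≥0∞)^n)⁻¹ := by
            rw [mul_assoc, ENNReal.mul_inv_cancel (by positivity)
              (by simpa using ENNReal.pow_ne_top (ENNReal.ofNat_ne_top (a := 2))), mul_one]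
        _ ≤ (cardf : ℝ≥0∞) * ((2:ℝ≥0∞)^n)⁻¹ := mul_le_mul_left h2 _
    -- pointwise values of the uniform pmf
    have happ : ∀ x : Point n, PMF.uniformOfFintype (Point n) x = ((2:ℝ≥0∞)^n)⁻¹ := by
      intro x
      rw [PMF.uniformOfFintype_apply]
      congr 1
      rw [show Fintype.card (Point n) = 2^n by simp [Fintype.card_fun]]
      push_cast; rfl
    calc ENNReal.ofReal (1/4) * (T0:ℝ≥0∞)
        = (2:ℝ≥0∞)⁻¹ * (ENNReal.ofReal (1/2) * (T0:ℝ≥0∞)) := by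
          rw [← mul_assoc]
          congr 1
          rw [show ((2:ℝ≥0∞))⁻¹ = ENNReal.ofReal (1/2) by
            rw [show ((2:ℝ≥0∞)) = ENNReal.ofReal 2 by norm_num,
              ← ENNReal.ofReal_inv_of_pos (by norm_num)]
            norm_num]
          rw [← ENNReal.ofReal_mul (by norm_num)]
          norm_num
      _ ≤ (cardf : ℝ≥0∞) * ((2:ℝ≥0∞)^n)⁻¹ * (ENNReal.ofReal (1/2) * (T0:ℝ≥0∞)) :=
          mul_le_mul_left hw _
      _ = cardf • (((2:ℝ≥0∞)^n)⁻¹ * (ENNReal.ofReal (1/2) * (T0:ℝ≥0∞))) := by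
          rw [nsmul_eq_mul, mul_assoc]
      _ ≤ ∑ x ∈ Finset.univ.filter (fun x : Point n => 2 * oneBits x ≤ n),
            ((2:ℝ≥0∞)^n)⁻¹ * pot n g s R T0 ⟨x,1,0⟩ := by
          refine Finset.card_nsmul_le_sum _ _ _ ?_
          intro x hx
          exact mul_le_mul_right (hterm x (Finset.mem_filter.mp hx).2) _
      _ ≤ ∑ x : Point n, ((2:ℝ≥0∞)^n)⁻¹ * pot n g s R T0 ⟨x,1,0⟩ :=
          Finset.sum_le_sum_of_subset (Finset.filter_subset _ _)
      _ = ∑ x : Point n, PMF.uniformOfFintype (Point n) x * pot n g s R T0 ⟨x,1,0⟩ := by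
          exact Finset.sum_congr rfl fun x _ => by rw [happ]
  -- from master to expectedRuntime
  have hrt : ENNReal.ofReal (1/4) * (T0 : ℝ≥0∞) ≤ expectedRuntime n f R := by
    refine le_trans hinit (le_trans hmain ?_)
    have hrw : ∀ t : ℕ, ((fun ν : PMF (State n) => ν.bind (stepAbs n f R))^[t] (initPMF n))
        = stateAt n f R t := fun t => (stateAt_eq n f R t).symm
    calc ∑ t ∈ Finset.range T0,
          ((fun ν : PMF (State n) => ν.bind (stepAbs n f R))^[t] (initPMF n)).toOuterMeasure
            {σ | ¬ isOpt n f σ.x}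
        = ∑ t ∈ Finset.range T0,
          (stateAt n f R t).toOuterMeasure {σ | ¬ isOpt n f σ.x} := by
          exact Finset.sum_congr rfl fun t _ => by rw [hrw]
      _ ≤ ∑' t : ℕ, (stateAt n f R t).toOuterMeasure {σ | ¬ isOpt n f σ.x} :=
          ENNReal.sum_le_tsum _
      _ ≤ expectedRuntime n f R := le_add_self
  -- compare the binomial coefficient with T0
  have hchoose : n.choose (2*g-1) ≤ T0 := by
    have h1 : n.choose (2*g-1) ≤ dur n R (2*g-1) := by
      have h2 : (n.choose (2*g-1) : ℝ) ≤ (n.choose (2*g-1) : ℝ) * Real.log R :=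
        le_mul_of_one_le_right (Nat.cast_nonneg _) hlogR
      have h3 : (n.choose (2*g-1) : ℝ) ≤ ((dur n R (2*g-1) : ℕ) : ℝ) := by
        refine le_trans h2 ?_
        rw [dur]
        exact Nat.le_ceil _
      exact_mod_cast h3
    have h2 : dur n R (2*g-1) ≤ T0 := by
      rw [hT0]
      unfold Wfun
      rw [Nat.sub_zero]
      exact Finset.single_le_sum (f := fun r => dur n R r) (fun i _ => Nat.zero_le _)
        (Finset.mem_Ico.mpr ⟨by omega, by omega⟩)
    omega
  calc ENNReal.ofReal ((n.choose (2 * g - 1) : ℝ) / 4)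
      = ENNReal.ofReal (1/4) * ENNReal.ofReal ((n.choose (2*g-1) : ℝ)) := by
        rw [← ENNReal.ofReal_mul (by norm_num)]
        congr 1
        ring
    _ ≤ ENNReal.ofReal (1/4) * (T0 : ℝ≥0∞) := by
        refine mul_le_mul_right ?_ _
        rw [ENNReal.ofReal_natCast]
        exact Nat.cast_le.mpr hchoose
    _ ≤ expectedRuntime n f R := hrt

/-! ### Numeric auxiliary lemmas -/

lemma sixteen_mul_le : ∀ j : ℕ, 8 ≤ j → 16 * j ≤ 2 ^ j := by
  intro j hj
  induction j with
  | zero => omega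
  | succ j ih =>
    rcases Nat.lt_or_ge j 8 with h | h
    · have hj7 : j = 7 := by omega
      subst hj7
      norm_num
    · have h1 := ih h
      have h16 : 16 ≤ 2 ^ j := by
        calc 16 = 2 ^ 4 := by norm_num
          _ ≤ 2 ^ j := Nat.pow_le_pow_right (by norm_num) (by omega)
      rw [pow_succ]
      omega

lemma tail_aux (n : ℕ) (hn : 98 ≤ n) : (n : ℝ) * (3/4) ^ n ≤ 1/2 := by
  have hn0 : (0:ℝ) < n := by positivity
  have hnn : (98:ℝ) ≤ n := by exact_mod_cast hn
  have h1 : 1 + (n:ℝ) * (1/7) ≤ (1 + 1/7) ^ n := one_add_mul_le_pow (by norm_num) n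
  have h2 : ((8:ℝ)/7) ^ n = (1 + 1/7) ^ n := by norm_num
  have hp : (0:ℝ) < (8/7:ℝ) ^ n := by positivity
  have h4 : ((7:ℝ)/8) ^ n ≤ 7 / n := by
    have h3 : ((7:ℝ)/8) ^ n = (((8:ℝ)/7) ^ n)⁻¹ := by
      rw [← inv_pow]
      norm_num
    rw [h3, inv_le_comm₀ hp (by positivity)]
    have h5 : (7/(n:ℝ))⁻¹ = n / 7 := by
      rw [inv_div]
    rw [h5, h2]
    linarith
  have hb : ((3:ℝ)/4) ^ n ≤ (((7:ℝ)/8) ^ n) ^ 2 := by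
    have hb1 : ((3:ℝ)/4) ^ n ≤ (((7:ℝ)/8) ^ 2) ^ n := by
      apply pow_le_pow_left₀ (by norm_num)
      norm_num
    calc ((3:ℝ)/4) ^ n ≤ (((7:ℝ)/8) ^ 2) ^ n := hb1
      _ = (((7:ℝ)/8) ^ n) ^ 2 := by rw [← pow_mul, ← pow_mul, Nat.mul_comm]
  have h40 : (0:ℝ) ≤ (7/8:ℝ) ^ n := by positivity
  have h6 : (((7:ℝ)/8) ^ n) ^ 2 ≤ (7 / (n:ℝ)) ^ 2 := pow_le_pow_left₀ h40 h4 2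
  have h7 : (n:ℝ) * (3/4) ^ n ≤ (n:ℝ) * (7 / (n:ℝ)) ^ 2 := by
    have := le_trans hb h6
    nlinarith
  refine le_trans h7 ?_
  have h8 : (n:ℝ) * (7 / (n:ℝ)) ^ 2 = 49 / n := by
    field_simp
    ring
  rw [h8, div_le_iff₀ hn0]
  linarith

set_option maxHeartbeats 1000000 in
/-- SD-RLS^r with parameter `R = n^d` (for a constant `d > 0`)
needs expected time `n^{Ω(log n)}` on TwoRates. -/
theorem sdrls_twoRates (d : ℝ) (hd : 0 < d) :
    ∃ c : ℝ, 0 < c ∧ ∃ N : ℕ, ∀ n a g : ℕ,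
      N ≤ n → a * a = n → 2 ^ g = n → g ∣ a → 4 ∣ n →
        ENNReal.ofReal ((n : ℝ) ^ (c * Real.log n)) ≤
          expectedRuntime n (TwoRates n (3 * n / 4 - a) g) ((n : ℝ) ^ d) := by
  refine ⟨1/2, by norm_num, max (2 ^ 42) (⌈Real.exp (1/d)⌉₊ + 1), ?_⟩
  intro n a g hN haa hg hga h4n
  -- extract the exponent j with a = 2^j, g = 2*j
  have hadvd : a ∣ 2 ^ g := by
    rw [hg]
    exact ⟨a, haa.symm⟩
  obtain ⟨j, hjle, haj⟩ := (Nat.dvd_prime_pow Nat.prime_two).mp hadvd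
  have hgj : g = j + j := by
    have hpow : (2:ℕ) ^ (j + j) = 2 ^ g := by
      rw [pow_add, ← haj, haa, hg]
    exact (Nat.pow_right_injective (le_refl 2) hpow).symm
  have hn42 : 2 ^ 42 ≤ n := le_trans (le_max_left _ _) hN
  have hj21 : 21 ≤ j := by
    have h1 : (2:ℕ) ^ 42 ≤ 2 ^ g := by rw [hg]; exact hn42
    have h2 : 42 ≤ g := (Nat.pow_le_pow_iff_right (by norm_num)).mp h1
    omega
  obtain ⟨b, hb⟩ : ∃ b, a = 2 * b := by
    refine ⟨2 ^ (j - 1), ?_⟩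
    rw [haj, ← pow_succ']
    congr 1
    omega
  have hjb : 16 * j ≤ a := by
    rw [haj]
    exact sixteen_mul_le j (by omega)
  have hanB : n = 4 * (b * b) := by rw [← haa, hb]; ring
  have hblarge : 168 ≤ b := by omega
  have h4bB : 4 * b ≤ b * b := Nat.mul_le_mul_right b (by omega)
  -- arithmetic hypotheses for `core`
  have hg0 : 0 < g := by omega
  have h2gn : 2 * g ≤ n / 2 := by omega
  have hs3 : 4 * (3 * n / 4 - a) ≤ 3 * n := by omega
  have hgap : 4 * (3 * n / 4 - a) + 8 * g ≤ 3 * n + 3 := by omega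
  have hsn : 3 * n / 4 - a < n := by omega
  have hns : n / 2 < 3 * n / 4 - a := by omega
  have hnR0 : (0:ℝ) < (n:ℝ) := by
    have : 0 < n := by omega
    exact_mod_cast this
  have hlogR : 1 ≤ Real.log ((n:ℝ) ^ d) := by
    rw [Real.log_rpow hnR0]
    have he : Real.exp (1/d) ≤ (n:ℝ) := by
      have h1 : (⌈Real.exp (1/d)⌉₊ : ℕ) ≤ n := by
        have := le_trans (le_max_right (2 ^ 42) (⌈Real.exp (1/d)⌉₊ + 1)) hN
        omega
      refine le_trans (Nat.le_ceil _) ?_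
      exact_mod_cast h1
    have h2 : 1/d ≤ Real.log n := by
      rw [← Real.log_exp (1/d)]
      exact Real.log_le_log (Real.exp_pos _) he
    calc (1:ℝ) = d * (1/d) := by field_simp
      _ ≤ d * Real.log n := mul_le_mul_of_nonneg_left h2 hd.le
  have htail : (((3 * n / 4 - a : ℕ) : ℝ) + 1) * (3/4) ^ n ≤ 1/2 := by
    have h1 : ((3 * n / 4 - a : ℕ) : ℝ) + 1 ≤ (n : ℝ) := by
      have : (3 * n / 4 - a) + 1 ≤ n := by omega
      exact_mod_cast this
    have h2 := tail_aux n (by omega)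
    have h3 : (0:ℝ) ≤ (3/4:ℝ) ^ n := by positivity
    nlinarith
  have hcore := core n g (3 * n / 4 - a) ((n:ℝ) ^ d)
    hg0 h2gn hs3 hgap hsn hns hlogR htail
  refine le_trans ?_ hcore
  apply ENNReal.ofReal_le_ofReal
  -- the remaining inequality:  n^((1/2)·log n) ≤ C(n, 2g-1)/4
  set k := 2 * g - 1 with hkdef
  have hk4j : k = 4 * j - 1 := by omega
  have hkn2 : 2 * k ≤ a := by omega
  have hk1 : 1 ≤ k := by omega
  have hkR0 : (0:ℝ) < (k:ℝ) := by
    have : 0 < k := hk1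
    exact_mod_cast this
  -- binomial lower bound: (n/(2k))^k ≤ choose n k
  have hch : (((n + 1 - k) ^ k : ℕ) : ℝ) / ((Nat.factorial k : ℕ) : ℝ) ≤ (n.choose k : ℝ) := by
    exact_mod_cast Nat.pow_le_choose (α := ℝ) k n
  have hfact : ((Nat.factorial k : ℕ) : ℝ) ≤ (k:ℝ) ^ k := by exact_mod_cast Nat.factorial_le_pow k
  have hfact0 : (0:ℝ) < ((Nat.factorial k : ℕ) : ℝ) := by exact_mod_cast (Nat.factorial_pos k)
  have hnk : (n:ℝ)/2 ≤ ((n + 1 - k : ℕ) : ℝ) := by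
    have h1 : n ≤ 2 * (n + 1 - k) := by omega
    have h2 : (n:ℝ) ≤ 2 * ((n + 1 - k : ℕ) : ℝ) := by exact_mod_cast h1
    linarith
  have hratio : ((n:ℝ)/(2 * k)) ^ k ≤ (n.choose k : ℝ) := by
    have h1 : ((n:ℝ)/(2 * k)) ^ k = ((n:ℝ)/2) ^ k / (k:ℝ) ^ k := by
      rw [← div_pow, div_div]
    have h2 : ((n:ℝ)/2) ^ k ≤ (((n + 1 - k : ℕ) : ℝ)) ^ k := by
      push_cast
      exact pow_le_pow_left₀ (by positivity) hnk k
    have h3 : ((n:ℝ)/2) ^ k / (k:ℝ) ^ k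
        ≤ (((n + 1 - k) ^ k : ℕ) : ℝ) / ((Nat.factorial k : ℕ) : ℝ) := by
      apply div_le_div₀ (by positivity) ?_ hfact0 hfact
      push_cast
      push_cast at h2
      exact h2
    rw [h1]
    exact le_trans h3 hch
  -- logarithmic comparison
  have hl2u : Real.log 2 < 0.6931471808 := Real.log_two_lt_d9
  have hl2l : (0.6931471803:ℝ) < Real.log 2 := Real.log_two_gt_d9
  have haR0 : (0:ℝ) < (a:ℝ) := by
    have : 0 < a := by omega
    exact_mod_cast this
  have hla : Real.log (a:ℝ) = (j:ℝ) * Real.log 2 := by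
    rw [haj]
    push_cast
    rw [Real.log_pow]
  have hLn : Real.log (n:ℝ) = 2 * Real.log (a:ℝ) := by
    rw [← haa]
    push_cast
    rw [Real.log_mul (ne_of_gt haR0) (ne_of_gt haR0)]
    ring
  have hjR : (21:ℝ) ≤ (j:ℝ) := by exact_mod_cast hj21
  have hlogratio : Real.log (a:ℝ) ≤ Real.log ((n:ℝ)/(2 * k)) := by
    have h2k0 : (0:ℝ) < 2 * (k:ℝ) := by linarith
    rw [Real.log_div (by positivity) (by positivity)]
    have h1 : Real.log (2 * (k:ℝ)) ≤ Real.log (a:ℝ) := by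
      apply Real.log_le_log h2k0
      exact_mod_cast hkn2
    rw [hLn]
    linarith
  have hla0 : 0 < Real.log (a:ℝ) := by
    rw [hla]
    nlinarith
  -- main exponent inequality
  have hexp : Real.log 4 + (1/2) * Real.log (n:ℝ) * Real.log (n:ℝ)
      ≤ (k:ℝ) * Real.log ((n:ℝ)/(2 * k)) := by
    have hlog4 : Real.log 4 = 2 * Real.log 2 := by
      rw [show (4:ℝ) = 2 ^ 2 by norm_num, Real.log_pow]
      push_cast
      ring
    have hkR : (4:ℝ) * (j:ℝ) - 1 ≤ (k:ℝ) + 0 := by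
      have : 4 * j - 1 = k := hk4j.symm
      have h1 : (4 * j - 1 : ℕ) = k := this
      have h2 : ((4 * j - 1 : ℕ) : ℝ) = (k:ℝ) := by exact_mod_cast h1
      have h3 : (4:ℝ) * (j:ℝ) - 1 ≤ ((4 * j - 1 : ℕ) : ℝ) := by
        have : 1 ≤ 4 * j := by omega
        push_cast [this]
        ring_nf
        linarith
      linarith
    have hstep1 : ((4:ℝ) * (j:ℝ) - 1) * Real.log (a:ℝ) ≤ (k:ℝ) * Real.log ((n:ℝ)/(2*k)) := by
      have h1 : ((4:ℝ) * (j:ℝ) - 1) * Real.log (a:ℝ) ≤ (k:ℝ) * Real.log (a:ℝ) := by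
        nlinarith
      refine le_trans h1 ?_
      exact mul_le_mul_of_nonneg_left hlogratio (by positivity)
    refine le_trans ?_ hstep1
    rw [hLn, hlog4, hla]
    have hu : (14:ℝ) ≤ (j:ℝ) * Real.log 2 := by nlinarith
    have hju : 2 * ((j:ℝ) * Real.log 2) ≤ 1.3863 * (j:ℝ) := by nlinarith
    nlinarith [mul_le_mul_of_nonneg_right hju (by nlinarith : (0:ℝ) ≤ (j:ℝ) * Real.log 2)]
  -- put it together
  have hfour : (4:ℝ) * (n:ℝ) ^ ((1/2) * Real.log (n:ℝ)) ≤ ((n:ℝ)/(2*k)) ^ k := by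
    have hrpos : (0:ℝ) < (n:ℝ)/(2*k) := by positivity
    have hL : (n:ℝ) ^ ((1/2) * Real.log (n:ℝ))
        = Real.exp ((1/2) * Real.log (n:ℝ) * Real.log (n:ℝ)) := by
      rw [Real.rpow_def_of_pos hnR0]
      ring_nf
    have hR : ((n:ℝ)/(2*k)) ^ k = Real.exp ((k:ℝ) * Real.log ((n:ℝ)/(2*k))) := by
      rw [← Real.exp_log (pow_pos hrpos k), Real.log_pow]
    have h4e : (4:ℝ) = Real.exp (Real.log 4) := by rw [Real.exp_log]; norm_num
    rw [hL, hR, h4e, ← Real.exp_add]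
    exact Real.exp_le_exp.mpr hexp
  have hfin := le_trans hfour hratio
  rw [le_div_iff₀ (by norm_num : (0:ℝ) < 4)]
  linarith


end SDRLS
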